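/- arXiv:2003.08164 — 7 statements merged into one kernel-verified Lean document; each statement's English description precedes it below -/
import Mathlib

section
/- Let a_1,...,a_ℓ be pairwise distinct vectors in ℕ^m with all entries positive. Then there exists a vector d ∈ ℕ^m with all entries at least 1 such that the products ∏_j a_{ij}^{d_j}, for i = 1,...,ℓ, are pairwise distinct. -/
open Polynomial

/-- For pairwise distinct vectors `a i ∈ ℕ^m` with positive entries, there is an
exponent vector `d` with all entries at least 1 making the products `∏ j, (a i j)^(d j)`
pairwise distinct. -/
theorem stmt2 (ℓ m : ℕ) (a : Fin ℓ → Fin m → ℕ)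
    (hpos : ∀ i j, 0 < a i j) (hdist : Function.Injective a) :
    ∃ d : Fin m → ℕ, (∀ j, 1 ≤ d j) ∧
      Function.Injective (fun i : Fin ℓ => ∏ j, (a i j) ^ (d j)) := by
  classical
  set P : Fin ℓ → Fin ℓ → ℝ[X] := fun i i' =>
    ∑ j : Fin m, C (Real.log (a i j) - Real.log (a i' j)) * X ^ ((j : ℕ) + 1) with hP
  have hlog : ∀ i i' (j : Fin m), a i j ≠ a i' j →
      Real.log (a i j) ≠ Real.log (a i' j) := by
    intro i i' j hne h
    apply hne
    have h1 : ((a i j : ℝ)) = a i' j := by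
      have e1 := Real.exp_log (x := (a i j : ℝ)) (by exact_mod_cast hpos i j)
      have e2 := Real.exp_log (x := (a i' j : ℝ)) (by exact_mod_cast hpos i' j)
      rw [← e1, ← e2, h]
    exact_mod_cast h1
  have hPne : ∀ i i', i ≠ i' → P i i' ≠ 0 := by
    intro i i' hne h0
    have hane : a i ≠ a i' := fun h => hne (hdist h)
    obtain ⟨j, hj⟩ : ∃ j, a i j ≠ a i' j := by
      by_contra hc
      push_neg at hc
      exact hane (funext hc)
    have hc : (P i i').coeff ((j : ℕ) + 1) = Real.log (a i j) - Real.log (a i' j) := by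
      simp only [hP, finset_sum_coeff, coeff_C_mul, coeff_X_pow]
      rw [Finset.sum_eq_single j]
      · simp
      · intro b _ hb
        have : ¬ ((j : ℕ) = (b : ℕ)) := fun h => hb (Fin.val_injective h).symm
        simp [this]
      · simp
    rw [h0] at hc
    simp at hc
    exact hlog i i' j hj (by linarith [sub_eq_zero.mp hc.symm])
  set bad : Set ℝ := ⋃ (i : Fin ℓ) (i' : Fin ℓ) (_ : i ≠ i'), {x | (P i i').IsRoot x} with hbad
  have hbadfin : bad.Finite := by
    apply Set.finite_iUnion
    intro i
    apply Set.finite_iUnion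
    intro i'
    apply Set.finite_iUnion
    intro hne
    exact Polynomial.finite_setOf_isRoot (hPne i i' hne)
  have hbadN : {n : ℕ | (n : ℝ) ∈ bad}.Finite := by
    apply Set.Finite.preimage _ hbadfin
    exact fun x _ y _ h => Nat.cast_injective h
  obtain ⟨t, ht⟩ : ∃ t : ℕ, t ∉ ({n : ℕ | (n : ℝ) ∈ bad} ∪ {0}) := by
    have : ({n : ℕ | (n : ℝ) ∈ bad} ∪ {0}).Finite := hbadN.union (Set.finite_singleton 0)
    have := this.infinite_compl
    exact this.nonempty
  have ht1 : 1 ≤ t := by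
    rcases Nat.eq_zero_or_pos t with h | h
    · exact absurd (by simp [h] : t ∈ ({n : ℕ | (n : ℝ) ∈ bad} ∪ {0})) ht
    · exact h
  have htbad : (t : ℝ) ∉ bad := fun h => ht (Or.inl h)
  refine ⟨fun j => t ^ ((j : ℕ) + 1), fun j => Nat.one_le_pow _ _ ht1, ?_⟩
  intro i i' h
  by_contra hne
  simp only at h
  apply htbad
  rw [hbad]
  refine Set.mem_iUnion.2 ⟨i, Set.mem_iUnion.2 ⟨i', Set.mem_iUnion.2 ⟨hne, ?_⟩⟩⟩
  have hlogeq : Real.log (∏ j, ((a i j : ℝ)) ^ (t ^ ((j : ℕ) + 1)))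
      = Real.log (∏ j, ((a i' j : ℝ)) ^ (t ^ ((j : ℕ) + 1))) := by
    congr 1
    exact_mod_cast congrArg (fun n : ℕ => (n : ℝ)) h
  rw [Real.log_prod (fun j _ => pow_ne_zero _ (by exact_mod_cast (hpos i j).ne')), Real.log_prod (fun j _ => pow_ne_zero _ (by exact_mod_cast (hpos i' j).ne'))] at hlogeq
  simp only [Real.log_pow] at hlogeq
  show (P i i').IsRoot (t : ℝ)
  simp only [Polynomial.IsRoot, hP, Polynomial.eval_finset_sum, Polynomial.eval_mul,
    Polynomial.eval_C, Polynomial.eval_pow, Polynomial.eval_X]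
  have : ∀ j : Fin m, (Real.log (a i j) - Real.log (a i' j)) * ((t : ℝ)) ^ ((j : ℕ) + 1)
      = (t ^ ((j : ℕ) + 1) : ℕ) * Real.log (a i j) - (t ^ ((j : ℕ) + 1) : ℕ) * Real.log (a i' j) := by
    intro j
    push_cast
    ring
  rw [Finset.sum_congr rfl (fun j _ => this j), Finset.sum_sub_distrib, hlogeq, sub_self]
end

section
/- Let G be a graph with an elimination tree T of height k, let f : V(G) → V(G) be an idempotent map with f(u) ⪯_T u for all u, and let H be the image graph with V(H) = f(V(G)) and E(H) = {f(u)f(u') : uu' ∈ E(G)}. Then the restriction of ⪯_T to V(H) is an elimination tree of H of height at most k; in particular V(H) has a unique ⪯_T-minimal element, namely the root of T. -/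
/-- Lemma 1: if `f` is an idempotent shrinking map on a graph `G` with elimination tree
of height at most `k` (root `r`), then the restriction of the tree order to the image of
`f` is an elimination tree of the image graph `H` (whose edges are the `f`-images of the
edges of `G`) of height at most `k`, and the image has the root `r` as its unique minimal
element. -/
theorem stmt7 {V : Type} [Finite V] [PartialOrder V] (k : ℕ)
    (G : SimpleGraph V)
    (hchain : ∀ t : V, IsChain (· ≤ ·) {u : V | u ≤ t})
    (r : V) (hroot : ∀ v, r ≤ v)
    (helim : ∀ u v, G.Adj u v → u ≤ v ∨ v ≤ u)
    (hheight : ∀ C : Finset V, IsChain (· ≤ ·) (C : Set V) → C.card ≤ k)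
    (f : V → V) (hidem : ∀ u, f (f u) = f u) (hshrink : ∀ u, f u ≤ u) :
    (∀ u u', G.Adj u u' → f u ≤ f u' ∨ f u' ≤ f u) ∧
    (∀ C : Finset V, (C : Set V) ⊆ Set.range f → IsChain (· ≤ ·) (C : Set V) → C.card ≤ k) ∧
    r ∈ Set.range f ∧ (∀ x ∈ Set.range f, r ≤ x) := by
  refine ⟨?_, fun C _ hC => hheight C hC, ⟨r, le_antisymm (hshrink r) (hroot _)⟩,
    fun x _ => hroot x⟩
  intro u u' hadj
  rcases helim u u' hadj with h | h
  · rcases eq_or_ne (f u) (f u') with he | hne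
    · exact Or.inl he.le
    · exact hchain u' ((hshrink u).trans h) (hshrink u') hne
  · rcases eq_or_ne (f u) (f u') with he | hne
    · exact Or.inl he.le
    · exact hchain u (hshrink u) ((hshrink u').trans h) hne
end

section
/- Let D = (F,T) where T is an elimination tree of F, and let h : F → H be a graph homomorphism. Then there exist a graph G with V(G) ⊆ V(F) and γ-colours inherited from F, a shrinking epimorphism f : D → G, and a past-injective homomorphism g : (G, T[V(G)]) → H such that h = g ∘ f. Moreover this factorization (G, f, g) is unique. -/
/-- `(S, Gadj, f, g)` is a factorization of the homomorphism `h` from the coloured graph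
`(F, γF)` (equipped with a tree order on its vertices) to `(H, γH)`: the graph `G`
(vertex set `S`, adjacency `Gadj`, colours inherited from `F`) is the image of the
shrinking epimorphism `f`, and `g` is a past-injective homomorphism from `G` to `H`
with `h = g ∘ f`. -/
def IsFactorization {V W : Type} [PartialOrder V]
    (F : SimpleGraph V) (γF : V → ℕ) (H : SimpleGraph W) (γH : W → ℕ)
    (h : V → W) (S : Set V) (Gadj : V → V → Prop) (f : V → V) (g : V → W) : Prop :=
  Set.range f = S ∧
  Symmetric Gadj ∧ (∀ u, ¬ Gadj u u) ∧ (∀ u v, Gadj u v → u ∈ S ∧ v ∈ S) ∧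
  (∀ u, f (f u) = f u) ∧ (∀ u, f u ≤ u) ∧
  (∀ u v, F.Adj u v → Gadj (f u) (f v)) ∧
  (∀ v v', Gadj v v' → ∃ u u', F.Adj u u' ∧ f u = v ∧ f u' = v') ∧
  (∀ v v', Gadj v v' → H.Adj (g v) (g v')) ∧
  (∀ v ∈ S, γH (g v) = γF v) ∧
  (∀ v v', v ∈ S → v' ∈ S → v < v' → g v ≠ g v') ∧
  (∀ u, h u = g (f u))

/-- Lemma 2: every homomorphism `h` from a graph with an elimination tree to `H`
factors uniquely as a past-injective homomorphism after a shrinking epimorphism. -/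
theorem stmt9 {V W : Type} [Finite V] [PartialOrder V]
    (F : SimpleGraph V) (γF : V → ℕ) (H : SimpleGraph W) (γH : W → ℕ)
    (hchain : ∀ t : V, IsChain (· ≤ ·) {u : V | u ≤ t})
    (r : V) (hroot : ∀ v, r ≤ v)
    (helim : ∀ u v, F.Adj u v → u ≤ v ∨ v ≤ u)
    (h : V → W)
    (hhom : ∀ u v, F.Adj u v → H.Adj (h u) (h v))
    (hcol : ∀ u, γH (h u) = γF u) :
    ∃ S Gadj f g, IsFactorization F γF H γH h S Gadj f g ∧
      ∀ S' Gadj' f' g', IsFactorization F γF H γH h S' Gadj' f' g' →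
        S' = S ∧ Gadj' = Gadj ∧ f' = f ∧ ∀ v ∈ S, g' v = g v := by
  classical
  -- minimum of the past fiber
  have key : ∀ u : V, ∃ m, (m ≤ u ∧ h m = h u) ∧ ∀ v, v ≤ u → h v = h u → m ≤ v := by
    intro u
    obtain ⟨m, hm, hmin⟩ := Set.Finite.exists_minimalFor id
      {v : V | v ≤ u ∧ h v = h u} (Set.toFinite _) ⟨u, le_rfl, rfl⟩
    refine ⟨m, hm, fun v hv hhv => ?_⟩
    by_cases heq : m = v
    · exact heq.le
    rcases hchain u (show m ∈ {w | w ≤ u} from hm.1) (show v ∈ {w | w ≤ u} from hv) heq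
      with h1 | h1
    · exact h1
    · exact hmin ⟨hv, hhv⟩ h1
  choose f hf using key
  have hfle : ∀ u, f u ≤ u := fun u => (hf u).1.1
  have hfh : ∀ u, h (f u) = h u := fun u => (hf u).1.2
  have hfmin : ∀ u v, v ≤ u → h v = h u → f u ≤ v := fun u => (hf u).2
  have hidem : ∀ u, f (f u) = f u := by
    intro u
    refine le_antisymm (hfle _) (hfmin u _ ((hfle (f u)).trans (hfle u)) ?_)
    rw [hfh, hfh]
  set S : Set V := Set.range f with hS
  have hmemS : ∀ v, v ∈ S ↔ f v = v := by
    intro v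
    constructor
    · rintro ⟨w, rfl⟩; exact hidem w
    · intro hv; exact ⟨v, hv⟩
  set Gadj : V → V → Prop := fun v v' => ∃ u u', F.Adj u u' ∧ f u = v ∧ f u' = v'
    with hG
  -- past-injectivity of any factorization's f' at the level needed
  have fact : IsFactorization F γF H γH h S Gadj f h := by
    refine ⟨rfl, ?_, ?_, ?_, hidem, hfle, ?_, ?_, ?_, ?_, ?_, ?_⟩
    · rintro v v' ⟨u, u', hadj, rfl, rfl⟩; exact ⟨u', u, hadj.symm, rfl, rfl⟩
    · rintro v ⟨u, u', hadj, rfl, h2⟩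
      exact (hhom u u' hadj).ne (by rw [← hfh u, ← hfh u', h2])
    · rintro u v ⟨a, b, hadj, rfl, rfl⟩; exact ⟨⟨a, rfl⟩, ⟨b, rfl⟩⟩
    · intro u v hadj; exact ⟨u, v, hadj, rfl, rfl⟩
    · rintro v v' hvv'; exact hvv'
    · rintro v v' ⟨u, u', hadj, rfl, rfl⟩
      rw [hfh, hfh]; exact hhom u u' hadj
    · intro v _; exact hcol v
    · intro v v' hv hv' hlt hgv
      have h1 : f v' ≤ v := hfmin v' v hlt.le hgv
      rw [(hmemS v').1 hv'] at h1
      exact absurd (h1.trans_lt hlt) (lt_irrefl v')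
    · intro u; exact (hfh u).symm
  refine ⟨S, Gadj, f, h, fact, ?_⟩
  rintro S' Gadj' f' g' ⟨hrange', hsym', hirr', hmem', hidem', hle', hhom', hsurj',
    ghom', gcol', ginj', hfac'⟩
  have hS' : ∀ v, f' v ∈ S' := fun v => hrange' ▸ ⟨v, rfl⟩
  have hgf' : ∀ u, h (f' u) = h u := by
    intro u
    rw [hfac' (f' u), hidem', ← hfac']
  have hff : f' = f := by
    funext u
    have h1 : f u ≤ f' u := hfmin u (f' u) (hle' u) (hgf' u)
    -- show f' u ≤ f u
    have h2 : f' (f u) = f' u := by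
      by_contra hne
      have hc := hchain u (show f' (f u) ∈ {w | w ≤ u} from (hle' _).trans ((hfle u).trans le_rfl))
        (show f' u ∈ {w | w ≤ u} from hle' u)
      have heq : g' (f' (f u)) = g' (f' u) := by
        rw [← hfac', ← hfac', hfh]
      rcases hc hne with hlt | hlt
      · exact ginj' _ _ (hS' _) (hS' _) (lt_of_le_of_ne hlt hne) heq
      · exact ginj' _ _ (hS' _) (hS' _) (lt_of_le_of_ne hlt (Ne.symm hne)) heq.symm
    have h3 : f' u ≤ f u := h2 ▸ hle' (f u)
    exact le_antisymm h3 h1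
  have hSS : S' = S := by rw [← hrange', hff]
  refine ⟨hSS, ?_, hff, ?_⟩
  · funext v v'
    apply propext
    constructor
    · intro hvv'
      obtain ⟨u, u', hadj, h1, h2⟩ := hsurj' v v' hvv'
      exact ⟨u, u', hadj, hff ▸ h1, hff ▸ h2⟩
    · rintro ⟨u, u', hadj, rfl, rfl⟩
      have := hhom' u u' hadj
      rwa [hff] at this
  · intro v hv
    have hfv : f v = v := (hmemS v).1 hv
    calc g' v = g' (f' v) := by rw [hff, hfv]
    _ = h v := (hfac' v).symm
end

section
/- Let D = (F,T) with T an elimination tree of F, and let h : F → H be a past-injective homomorphism. Then there is a unique graph G ⊇ F with V(G) = V(F) such that T is an elimination tree of G and h is a past-preserving homomorphism from (G,T) to H. -/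
/-- Unique edge completion: if `h` is a past-injective homomorphism from `(F,T)` to `H`,
then there is a unique graph `G ⊇ F` on the same (coloured) vertex set such that `T` is an
elimination tree of `G` and `h` is a past-preserving homomorphism from `(G,T)` to `H`. -/
theorem stmt11 {V W : Type} [Finite V] [PartialOrder V]
    (F : SimpleGraph V) (γF : V → ℕ) (H : SimpleGraph W) (γH : W → ℕ)
    (hchain : ∀ t : V, IsChain (· ≤ ·) {u : V | u ≤ t})
    (r : V) (hroot : ∀ v, r ≤ v)
    (helim : ∀ u v, F.Adj u v → u ≤ v ∨ v ≤ u)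
    (h : V → W)
    (hhom : ∀ u v, F.Adj u v → H.Adj (h u) (h v))
    (hcol : ∀ u, γH (h u) = γF u)
    (hpi : ∀ u v : V, u < v → h u ≠ h v) :
    ∃! G : SimpleGraph V, F ≤ G ∧ (∀ u v, G.Adj u v → u ≤ v ∨ v ≤ u) ∧
      (∀ u v : V, u ≤ v → (G.Adj u v ↔ H.Adj (h u) (h v))) := by
  refine ⟨⟨fun u v => (u < v ∨ v < u) ∧ H.Adj (h u) (h v), ?_, ?_⟩, ⟨?_, ?_, ?_⟩, ?_⟩
  · constructor; intro u v ⟨hc, ha⟩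
    exact ⟨hc.symm, ha.symm⟩
  · constructor; intro u ⟨hc, _⟩
    exact (lt_irrefl u) (hc.elim id id)
  · intro u v huv
    refine ⟨?_, hhom u v huv⟩
    rcases helim u v huv with hle | hle
    · exact Or.inl (lt_of_le_of_ne hle huv.ne)
    · exact Or.inr (lt_of_le_of_ne hle huv.ne.symm)
  · intro u v ⟨hc, _⟩
    exact hc.elim (fun hlt => Or.inl hlt.le) (fun hlt => Or.inr hlt.le)
  · intro u v hle
    constructor
    · exact fun ⟨_, ha⟩ => ha
    · intro ha
      have hne : u ≠ v := by rintro rfl; exact H.irrefl ha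
      exact ⟨Or.inl (lt_of_le_of_ne hle hne), ha⟩
  · intro G ⟨_, hG2, hG3⟩
    ext u v
    constructor
    · intro hGuv
      refine ⟨?_, ?_⟩
      · rcases hG2 u v hGuv with hle | hle
        · exact Or.inl (lt_of_le_of_ne hle hGuv.ne)
        · exact Or.inr (lt_of_le_of_ne hle hGuv.ne.symm)
      · rcases hG2 u v hGuv with hle | hle
        · exact (hG3 u v hle).1 hGuv
        · exact ((hG3 v u hle).1 hGuv.symm).symm
    · rintro ⟨hc, ha⟩
      rcases hc with hlt | hlt
      · exact (hG3 u v hlt.le).2 ha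
      · exact ((hG3 v u hlt.le).2 ha.symm).symm
end

section
/- Let D = (F,T) with T an elimination tree of F of height at most k, and H any graph. Then pi-hom(D,H) = Σ_G pp-hom((G,T),H), where the sum ranges over all graphs G ⊇ F with V(G) = V(F) such that T is an elimination tree of G. -/
open Classical in
/-- Corollary: `pi-hom(D,H)` equals the sum of `pp-hom((G,T),H)` over all graphs `G ⊇ F`
on the same vertex set for which `T` is still an elimination tree, where `D = (F,T)`
has an elimination tree `T` of height at most `k`. -/
theorem stmt12 {V W : Type} [Fintype V] [DecidableEq V] [Fintype W] [PartialOrder V]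
    (k : ℕ)
    (F : SimpleGraph V) (γF : V → ℕ) (H : SimpleGraph W) (γH : W → ℕ)
    (hchain : ∀ t : V, IsChain (· ≤ ·) {u : V | u ≤ t})
    (r : V) (hroot : ∀ v, r ≤ v)
    (helim : ∀ u v, F.Adj u v → u ≤ v ∨ v ≤ u)
    (hheight : ∀ C : Finset V, IsChain (· ≤ ·) (C : Set V) → C.card ≤ k) :
    Nat.card {h : V → W //
        (∀ u v, F.Adj u v → H.Adj (h u) (h v)) ∧ (∀ u, γH (h u) = γF u) ∧
        (∀ u v : V, u < v → h u ≠ h v)} =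
      ∑ G : SimpleGraph V,
        if F ≤ G ∧ (∀ u v, G.Adj u v → u ≤ v ∨ v ≤ u) then
          Nat.card {h : V → W //
            (∀ u v, G.Adj u v → H.Adj (h u) (h v)) ∧ (∀ u, γH (h u) = γF u) ∧
            (∀ u v : V, u < v → h u ≠ h v) ∧
            (∀ u v : V, u ≤ v → (G.Adj u v ↔ H.Adj (h u) (h v)))}
        else 0 := by
  classical
  -- fiber over G : those h satisfying the pp conditions together with the condition on G
  set C : SimpleGraph V → Type := fun G =>
    {h : V → W // (F ≤ G ∧ (∀ u v, G.Adj u v → u ≤ v ∨ v ≤ u)) ∧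
      (∀ u v, G.Adj u v → H.Adj (h u) (h v)) ∧ (∀ u, γH (h u) = γF u) ∧
      (∀ u v : V, u < v → h u ≠ h v) ∧
      (∀ u v : V, u ≤ v → (G.Adj u v ↔ H.Adj (h u) (h v)))} with hC
  -- the graph built from a past-injective homomorphism
  have main : Nat.card {h : V → W //
        (∀ u v, F.Adj u v → H.Adj (h u) (h v)) ∧ (∀ u, γH (h u) = γF u) ∧
        (∀ u v : V, u < v → h u ≠ h v)} = Nat.card (Σ G : SimpleGraph V, C G) := by
    apply Nat.card_congr
    refine
      { toFun := fun h => ⟨⟨fun u v => u ≠ v ∧ (u ≤ v ∨ v ≤ u) ∧ H.Adj (h.1 u) (h.1 v),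
          ⟨fun u v ⟨hne, hcmp, hadj⟩ => ⟨hne.symm, hcmp.symm, hadj.symm⟩⟩,
          ⟨fun u ⟨hne, _⟩ => hne rfl⟩⟩, h.1, ?_⟩,
        invFun := fun p => ⟨p.2.1, ?_, p.2.2.2.2.1, p.2.2.2.2.2.1⟩,
        left_inv := fun h => rfl,
        right_inv := ?_ }
    · obtain ⟨h, hhom, hγ, hinj⟩ := h
      refine ⟨⟨fun u v hadj => ⟨hadj.ne, helim u v hadj, hhom u v hadj⟩,
        fun u v hadj => hadj.2.1⟩, fun u v hadj => hadj.2.2, hγ, hinj, ?_⟩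
      intro u v huv
      constructor
      · exact fun hadj => hadj.2.2
      · intro hadj
        refine ⟨fun heq => ?_, Or.inl huv, hadj⟩
        subst heq; exact H.irrefl hadj
    · -- a member of a fiber is a past-injective homomorphism of F
      obtain ⟨G, h, ⟨⟨hFG, _⟩, hhom, _, _, _⟩⟩ := p
      exact fun u v hadj => hhom u v (hFG hadj)
    · rintro ⟨G, h, ⟨⟨hFG, hGelim⟩, hhom, hγ, hinj, hpp⟩⟩
      have hG : (⟨fun u v => u ≠ v ∧ (u ≤ v ∨ v ≤ u) ∧ H.Adj (h u) (h v),
          ⟨fun u v ⟨hne, hcmp, hadj⟩ => ⟨hne.symm, hcmp.symm, hadj.symm⟩⟩,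
          ⟨fun u ⟨hne, _⟩ => hne rfl⟩⟩ : SimpleGraph V) = G := by
        ext u v
        constructor
        · rintro ⟨hne, hcmp, hadj⟩
          rcases hcmp with hle | hle
          · exact (hpp u v hle).mpr hadj
          · exact ((hpp v u hle).mpr hadj.symm).symm
        · intro hadj
          exact ⟨hadj.ne, hGelim u v hadj, hhom u v hadj⟩
      -- dependent pair equality
      refine Sigma.ext hG ?_
      subst hG
      rfl
  rw [main]
  have hfin : ∀ G : SimpleGraph V, Fintype (C G) := fun G => by
    rw [hC]; infer_instance
  rw [Nat.card_eq_fintype_card, Fintype.card_sigma]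
  apply Finset.sum_congr rfl
  intro G _
  by_cases hP : F ≤ G ∧ (∀ u v, G.Adj u v → u ≤ v ∨ v ≤ u)
  · rw [if_pos hP]
    rw [← Nat.card_eq_fintype_card]
    apply Nat.card_congr
    exact Equiv.subtypeEquivRight (fun h => by tauto)
  · rw [if_neg hP]
    rw [Fintype.card_eq_zero_iff]
    constructor
    rintro ⟨h, hcond, _⟩
    exact hP hcond
end

section
/- For all k ≥ 1 and all graphs G, G' of the same order, Duplicator has a winning strategy in the k-round bijective pebble game on G and G' if and only if G and G' satisfy the same sentences of first-order logic with counting quantifiers of quantifier rank at most k. -/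
/-- Formulas of first-order logic with counting quantifiers over coloured graphs,
with free variables among `Fin n` (colours are natural numbers). -/
inductive CFormula : ℕ → Type
  | eq {n : ℕ} (i j : Fin n) : CFormula n
  | adj {n : ℕ} (i j : Fin n) : CFormula n
  | col {n : ℕ} (i : Fin n) (c : ℕ) : CFormula n
  | not {n : ℕ} : CFormula n → CFormula n
  | or {n : ℕ} : CFormula n → CFormula n → CFormula n
  /-- the counting quantifier `∃^{≥p} x φ` binding the last variable -/
  | count {n : ℕ} (p : ℕ) : CFormula (n + 1) → CFormula n

/-- Quantifier rank of a counting formula. -/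
def CFormula.qr : ∀ {n : ℕ}, CFormula n → ℕ
  | _, .eq _ _ => 0
  | _, .adj _ _ => 0
  | _, .col _ _ => 0
  | _, .not φ => φ.qr
  | _, .or φ ψ => max φ.qr ψ.qr
  | _, .count _ φ => φ.qr + 1

/-- Satisfaction of a counting formula in a coloured graph under an assignment. -/
def CSat {V : Type} (G : SimpleGraph V) (γ : V → ℕ) :
    ∀ {n : ℕ}, CFormula n → (Fin n → V) → Prop
  | _, .eq i j, a => a i = a j
  | _, .adj i j, a => G.Adj (a i) (a j)
  | _, .col i c, a => γ (a i) = c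
  | _, .not φ, a => ¬ CSat G γ φ a
  | _, .or φ ψ, a => CSat G γ φ a ∨ CSat G γ ψ a
  | _, .count p φ, a => ∃ s : Finset V, s.card = p ∧ ∀ v ∈ s, CSat G γ φ (Fin.snoc a v)

/-- A position of the bijective pebble game is a local isomorphism. -/
def LocalIso {V V' C : Type} (G : SimpleGraph V) (γ : V → C)
    (G' : SimpleGraph V') (γ' : V' → C) (l : List (V × V')) : Prop :=
  (∀ p ∈ l, γ p.1 = γ' p.2) ∧
  ∀ p ∈ l, ∀ q ∈ l, (p.1 = q.1 ↔ p.2 = q.2) ∧ (G.Adj p.1 q.1 ↔ G'.Adj p.2 q.2)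

/-- Duplicator has a winning strategy in the `k`-round bijective pebble game from the
given position: in each round she picks a bijection, Spoiler picks a vertex, and after
`k` rounds the position must be a local isomorphism. -/
def DWin {V V' C : Type} (G : SimpleGraph V) (γ : V → C)
    (G' : SimpleGraph V') (γ' : V' → C) : ℕ → List (V × V') → Prop
  | 0, l => LocalIso G γ G' γ' l
  | k + 1, l => ∃ f : V ≃ V', ∀ v : V, DWin G γ G' γ' k ((v, f v) :: l)

section Aux
open Finset
open scoped Classical

variable {V V' : Type}

/-- Conjunction as derived connective. -/
def CAnd {n : ℕ} (φ ψ : CFormula n) : CFormula n := .not (.or (.not φ) (.not ψ))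

lemma CAnd_qr {n : ℕ} (φ ψ : CFormula n) : (CAnd φ ψ).qr = max φ.qr ψ.qr := rfl

lemma CSat_CAnd {G : SimpleGraph V} {γ : V → ℕ} {n : ℕ} {φ ψ : CFormula n} {a : Fin n → V} :
    CSat G γ (CAnd φ ψ) a ↔ CSat G γ φ a ∧ CSat G γ ψ a := by
  simp [CAnd, CSat]

/-- A tautology. -/
def CTrue (n : ℕ) : CFormula (n + 1) := .not (.adj (Fin.last n) (Fin.last n))

lemma CTrue_qr (n : ℕ) : (CTrue n).qr = 0 := rfl

lemma CSat_CTrue {G : SimpleGraph V} {γ : V → ℕ} {n : ℕ} {a : Fin (n+1) → V} :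
    CSat G γ (CTrue n) a := by
  simp [CTrue, CSat]

/-- Conjunction of a list of formulas. -/
def conjList {n : ℕ} : List (CFormula (n + 1)) → CFormula (n + 1)
  | [] => CTrue n
  | φ :: L => CAnd φ (conjList L)

lemma conjList_qr {n k : ℕ} (L : List (CFormula (n + 1))) (h : ∀ φ ∈ L, φ.qr ≤ k) :
    (conjList L).qr ≤ k := by
  induction L with
  | nil => simp [conjList, CTrue_qr]
  | cons φ L ih =>
    simp only [conjList, CAnd_qr, max_le_iff]
    exact ⟨h φ (by simp), ih fun ψ hψ => h ψ (by simp [hψ])⟩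

lemma CSat_conjList {G : SimpleGraph V} {γ : V → ℕ} {n : ℕ} {L : List (CFormula (n + 1))}
    {a : Fin (n+1) → V} : CSat G γ (conjList L) a ↔ ∀ φ ∈ L, CSat G γ φ a := by
  induction L with
  | nil => simp [conjList, CSat_CTrue]
  | cons φ L ih => simp [conjList, CSat_CAnd, ih]

lemma CSat_count [Fintype V] {G : SimpleGraph V} {γ : V → ℕ} {n : ℕ} {p : ℕ}
    {φ : CFormula (n + 1)} {a : Fin n → V} :
    CSat G γ (.count p φ) a ↔
      p ≤ (univ.filter fun v => CSat G γ φ (Fin.snoc a v)).card := by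
  constructor
  · rintro ⟨s, hs, hsat⟩
    rw [← hs]
    exact card_le_card fun v hv => mem_filter.2 ⟨mem_univ v, hsat v hv⟩
  · intro h
    obtain ⟨s, hsub, hcard⟩ := Finset.exists_subset_card_eq h
    exact ⟨s, hcard, fun v hv => (mem_filter.1 (hsub hv)).2⟩

end Aux
section Fwd
open Finset
open scoped Classical

variable {V V' C : Type} {G : SimpleGraph V} {γ : V → C} {G' : SimpleGraph V'} {γ' : V' → C}

lemma LocalIso_of_cons {p : V × V'} {l : List (V × V')}
    (h : LocalIso G γ G' γ' (p :: l)) : LocalIso G γ G' γ' l :=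
  ⟨fun q hq => h.1 q (List.mem_cons_of_mem _ hq),
   fun q hq r hr => h.2 q (List.mem_cons_of_mem _ hq) r (List.mem_cons_of_mem _ hr)⟩

lemma DWin_localIso : ∀ {k : ℕ} {l : List (V × V')},
    DWin G γ G' γ' k l → LocalIso G γ G' γ' l := by
  intro k
  induction k with
  | zero => intro l h; exact h
  | succ k ih =>
    intro l h
    obtain ⟨f, hf⟩ := h
    rcases isEmpty_or_nonempty V with hV | hV
    · constructor
      · intro p hp; exact (IsEmpty.false p.1).elim
      · intro p hp; exact (IsEmpty.false p.1).elim
    · obtain ⟨v⟩ := hV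
      exact LocalIso_of_cons (ih (hf v))

lemma forward {V V' : Type} {G : SimpleGraph V} {γ : V → ℕ} {G' : SimpleGraph V'}
    {γ' : V' → ℕ} {n : ℕ} (φ : CFormula n) :
    ∀ (k : ℕ) (l : List (V × V')) (a : Fin n → V) (a' : Fin n → V'), φ.qr ≤ k →
      (∀ i, (a i, a' i) ∈ l) → DWin G γ G' γ' k l →
      (CSat G γ φ a ↔ CSat G' γ' φ a') := by
  induction φ with
  | eq i j =>
    intro k l a a' _ hmem hwin
    have h := (DWin_localIso hwin).2 _ (hmem i) _ (hmem j)
    exact h.1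
  | adj i j =>
    intro k l a a' _ hmem hwin
    have h := (DWin_localIso hwin).2 _ (hmem i) _ (hmem j)
    exact h.2
  | col i c =>
    intro k l a a' _ hmem hwin
    have h := (DWin_localIso hwin).1 _ (hmem i)
    show γ (a i) = c ↔ γ' (a' i) = c
    rw [h]
  | not φ ih =>
    intro k l a a' hqr hmem hwin
    exact not_congr (ih k l a a' hqr hmem hwin)
  | or φ ψ ihφ ihψ =>
    intro k l a a' hqr hmem hwin
    simp only [CFormula.qr, max_le_iff] at hqr
    exact or_congr (ihφ k l a a' hqr.1 hmem hwin) (ihψ k l a a' hqr.2 hmem hwin)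
  | count p φ ih =>
    intro k l a a' hqr hmem hwin
    simp only [CFormula.qr] at hqr
    obtain ⟨k, rfl⟩ : ∃ k', k = k' + 1 := ⟨k - 1, by omega⟩
    have hqr' : φ.qr ≤ k := by omega
    obtain ⟨f, hf⟩ := hwin
    have key : ∀ v : V, CSat G γ φ (Fin.snoc a v) ↔ CSat G' γ' φ (Fin.snoc a' (f v)) := by
      intro v
      refine ih k ((v, f v) :: l) _ _ hqr' ?_ (hf v)
      intro i
      refine Fin.lastCases ?_ ?_ i
      · simp
      · intro i
        simp only [Fin.snoc_castSucc]
        exact List.mem_cons_of_mem _ (hmem i)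
    constructor
    · rintro ⟨s, hs, hsat⟩
      classical
      refine ⟨s.image f, by rw [Finset.card_image_of_injective _ f.injective, hs], ?_⟩
      intro v' hv'
      obtain ⟨v, hv, rfl⟩ := Finset.mem_image.1 hv'
      exact (key v).1 (hsat v hv)
    · rintro ⟨s, hs, hsat⟩
      classical
      refine ⟨s.image f.symm, by rw [Finset.card_image_of_injective _ f.symm.injective, hs], ?_⟩
      intro v hv
      obtain ⟨v', hv', rfl⟩ := Finset.mem_image.1 hv
      refine (key _).2 ?_
      rw [Equiv.apply_symm_apply]
      exact hsat v' hv'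

end Fwd
section Matching
open Finset
open scoped Classical

lemma exists_equiv_of_blocks {V V' : Type} [Fintype V] [Fintype V'] (E : V → V' → Prop)
    (hcard : Fintype.card V = Fintype.card V')
    (h1 : ∀ v w v' w', E v v' → E v w' → E w v' → E w w')
    (h2 : ∀ v v', E v v' →
      (univ.filter fun w' => E v w').card = (univ.filter fun w => E w v').card)
    (h3 : ∀ v, ∃ v', E v v') :
    ∃ f : V ≃ V', ∀ v, E v (f v) := by
  set S : V → Finset V' := fun v => univ.filter fun v' => E v v' with hS
  set T : V' → Finset V := fun v' => univ.filter fun v => E v v' with hT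
  have hmemS : ∀ v v', v' ∈ S v ↔ E v v' := by intro v v'; simp [hS]
  have hmemT : ∀ v v', v ∈ T v' ↔ E v v' := by intro v v'; simp [hT]
  have hall : ∀ A : Finset V, A.card ≤ (A.biUnion S).card := by
    intro A
    set U : Finset V' := A.biUnion S with hU
    set B : Finset V := U.biUnion T with hB
    have hSU : ∀ v ∈ B, S v ⊆ U := by
      intro v hv
      obtain ⟨v', hv'U, hvv'⟩ := Finset.mem_biUnion.1 hv
      rw [hmemT] at hvv'
      obtain ⟨u, huA, huv'⟩ := Finset.mem_biUnion.1 hv'U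
      rw [hmemS] at huv'
      intro w' hw'
      rw [hmemS] at hw'
      exact Finset.mem_biUnion.2 ⟨u, huA, (hmemS _ _).2 (h1 v u v' w' hvv' hw' huv')⟩
    have hAB : A ⊆ B := by
      intro v hv
      obtain ⟨v', hvv'⟩ := h3 v
      have hv'U : v' ∈ U := Finset.mem_biUnion.2 ⟨v, hv, (hmemS _ _).2 hvv'⟩
      exact Finset.mem_biUnion.2 ⟨v', hv'U, (hmemT _ _).2 hvv'⟩
    have hTB : ∀ v' ∈ U, T v' ⊆ B := fun v' hv' v hv => Finset.mem_biUnion.2 ⟨v', hv', hv⟩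
    have hcount : (B.card : ℚ) = (U.card : ℚ) := by
      have hL : ∀ v ∈ B, (∑ v' ∈ U, if E v v' then ((S v).card : ℚ)⁻¹ else 0) = 1 := by
        intro v hv
        rw [← Finset.sum_filter]
        have hfil : U.filter (fun v' => E v v') = S v := by
          apply Finset.Subset.antisymm
          · intro v' hv'
            exact (hmemS _ _).2 (Finset.mem_filter.1 hv').2
          · intro v' hv'
            exact Finset.mem_filter.2 ⟨hSU v hv hv', (hmemS _ _).1 hv'⟩
        rw [hfil, Finset.sum_const, nsmul_eq_mul]
        have hne : (S v).Nonempty := by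
          obtain ⟨v', hv'U, hvv'⟩ := Finset.mem_biUnion.1 hv
          exact ⟨v', (hmemS _ _).2 ((hmemT _ _).1 hvv')⟩
        have : ((S v).card : ℚ) ≠ 0 := by
          simpa using Finset.card_ne_zero_of_mem hne.choose_spec
        field_simp
      have hR : ∀ v' ∈ U, (∑ v ∈ B, if E v v' then ((S v).card : ℚ)⁻¹ else 0) = 1 := by
        intro v' hv'
        rw [← Finset.sum_filter]
        have hfil : B.filter (fun v => E v v') = T v' := by
          apply Finset.Subset.antisymm
          · intro v hv
            exact (hmemT _ _).2 (Finset.mem_filter.1 hv).2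
          · intro v hv
            exact Finset.mem_filter.2 ⟨hTB v' hv' hv, (hmemT _ _).1 hv⟩
        rw [hfil]
        have hcardeq : ∀ v ∈ T v', ((S v).card : ℚ)⁻¹ = ((T v').card : ℚ)⁻¹ := by
          intro v hv
          rw [show (S v).card = (T v').card from h2 v v' ((hmemT _ _).1 hv)]
        rw [Finset.sum_congr rfl hcardeq, Finset.sum_const, nsmul_eq_mul]
        have hne : (T v').Nonempty := by
          obtain ⟨u, huA, huv'⟩ := Finset.mem_biUnion.1 hv'
          exact ⟨u, (hmemT _ _).2 ((hmemS _ _).1 huv')⟩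
        have : ((T v').card : ℚ) ≠ 0 := by
          simpa using Finset.card_ne_zero_of_mem hne.choose_spec
        field_simp
      calc (B.card : ℚ) = ∑ v ∈ B, (1 : ℚ) := by simp
        _ = ∑ v ∈ B, ∑ v' ∈ U, (if E v v' then ((S v).card : ℚ)⁻¹ else 0) :=
            Finset.sum_congr rfl fun v hv => (hL v hv).symm
        _ = ∑ v' ∈ U, ∑ v ∈ B, (if E v v' then ((S v).card : ℚ)⁻¹ else 0) := Finset.sum_comm
        _ = ∑ v' ∈ U, (1 : ℚ) := Finset.sum_congr rfl hR
        _ = (U.card : ℚ) := by simp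
    have hBU : B.card = U.card := Nat.cast_injective hcount
    calc A.card ≤ B.card := Finset.card_le_card hAB
      _ = U.card := hBU
  obtain ⟨f0, hinj, hf0⟩ := (Finset.all_card_le_biUnion_card_iff_exists_injective S).1 hall
  have hbij : Function.Bijective f0 :=
    (Fintype.bijective_iff_injective_and_card f0).2 ⟨hinj, hcard⟩
  exact ⟨Equiv.ofBijective f0 hbij, fun v => (hmemS _ _).1 (hf0 v)⟩

end Matching
section Step
open Finset
open scoped Classical

variable {V V' : Type} [Fintype V] [Fintype V']
variable {G : SimpleGraph V} {γ : V → ℕ} {G' : SimpleGraph V'} {γ' : V' → ℕ}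

lemma main_step {n k : ℕ} (a : Fin n → V) (a' : Fin n → V')
    (hcard : Fintype.card V = Fintype.card V')
    (H : ∀ φ : CFormula n, φ.qr ≤ k + 1 → (CSat G γ φ a ↔ CSat G' γ' φ a')) :
    ∃ f : V ≃ V', ∀ (v : V) (φ : CFormula (n + 1)), φ.qr ≤ k →
      (CSat G γ φ (Fin.snoc a v) ↔ CSat G' γ' φ (Fin.snoc a' (f v))) := by
  set E : V → V' → Prop := fun v v' => ∀ φ : CFormula (n + 1), φ.qr ≤ k →
    (CSat G γ φ (Fin.snoc a v) ↔ CSat G' γ' φ (Fin.snoc a' v')) with hE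
  set Req : V → V → Prop := fun v w => ∀ φ : CFormula (n + 1), φ.qr ≤ k →
    (CSat G γ φ (Fin.snoc a v) ↔ CSat G γ φ (Fin.snoc a w)) with hReq
  -- distinguishing formulas
  have hg : ∀ v w : V, ¬ Req v w → ∃ ψ : CFormula (n + 1), ψ.qr ≤ k ∧
      CSat G γ ψ (Fin.snoc a v) ∧ ¬ CSat G γ ψ (Fin.snoc a w) := by
    intro v w h
    simp only [hReq, not_forall] at h
    obtain ⟨φ, hφk, hne⟩ := h
    by_cases hGv : CSat G γ φ (Fin.snoc a v)
    · exact ⟨φ, hφk, hGv, fun hw => hne (iff_of_true hGv hw)⟩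
    · refine ⟨.not φ, hφk, hGv, ?_⟩
      intro hw
      exact hne (iff_of_false hGv hw)
  set g : V → V → CFormula (n + 1) := fun v w =>
    if h : ∃ ψ : CFormula (n + 1), ψ.qr ≤ k ∧
        CSat G γ ψ (Fin.snoc a v) ∧ ¬ CSat G γ ψ (Fin.snoc a w)
    then h.choose else CTrue n with hgdef
  have hgqr : ∀ v w, (g v w).qr ≤ k := by
    intro v w
    rw [hgdef]
    dsimp only
    split
    · next h => exact h.choose_spec.1
    · simp [CTrue_qr]
  have hgv : ∀ v w, CSat G γ (g v w) (Fin.snoc a v) := by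
    intro v w
    rw [hgdef]
    dsimp only
    split
    · next h => exact h.choose_spec.2.1
    · exact CSat_CTrue
  set θ : V → CFormula (n + 1) := fun v => conjList ((univ.toList (α := V)).map (g v)) with hθdef
  have hθqr : ∀ v, (θ v).qr ≤ k := by
    intro v
    apply conjList_qr
    intro φ hφ
    obtain ⟨w, _, rfl⟩ := List.mem_map.1 hφ
    exact hgqr v w
  have hθ : ∀ v w, CSat G γ (θ v) (Fin.snoc a w) ↔ Req v w := by
    intro v w
    constructor
    · intro hsat
      by_contra hnr
      have h := hg v w hnr
      have hmem : g v w ∈ (univ.toList (α := V)).map (g v) :=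
        List.mem_map.2 ⟨w, Finset.mem_toList.2 (mem_univ w), rfl⟩
      have := CSat_conjList.1 hsat _ hmem
      rw [hgdef] at this
      simp only [dif_pos h] at this
      exact h.choose_spec.2.2 this
    · intro hr
      apply CSat_conjList.2
      intro φ hφ
      obtain ⟨u, _, rfl⟩ := List.mem_map.1 hφ
      exact (hr _ (hgqr v u)).1 (hgv v u)
  have hθself : ∀ v, CSat G γ (θ v) (Fin.snoc a v) := by
    intro v
    exact (hθ v v).2 fun φ _ => Iff.rfl
  set CvG : V → Finset V := fun v => univ.filter fun w => CSat G γ (θ v) (Fin.snoc a w)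
    with hCvG
  set p : V → ℕ := fun v => (CvG v).card with hp
  set D' : V → Finset V' := fun v => univ.filter fun v' => CSat G' γ' (θ v) (Fin.snoc a' v')
    with hD'
  have hD'card : ∀ v, (D' v).card = p v := by
    intro v
    have h1 : CSat G γ (.count (p v) (θ v)) a := CSat_count.2 (le_refl _)
    have h2 : ¬ CSat G γ (.count (p v + 1) (θ v)) a := by
      rw [CSat_count]
      change ¬ (p v + 1 ≤ (CvG v).card)
      change ¬ (p v + 1 ≤ p v)
      omega
    have hq : ∀ q : ℕ, (CFormula.count q (θ v)).qr ≤ k + 1 := by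
      intro q
      simp only [CFormula.qr]
      have := hθqr v
      omega
    have h1' := (H _ (hq (p v))).1 h1
    have h2' : ¬ CSat G' γ' (.count (p v + 1) (θ v)) a' := fun h => h2 ((H _ (hq (p v + 1))).2 h)
    rw [CSat_count] at h1' h2'
    have hrfl : (univ.filter fun v' => CSat G' γ' (θ v) (Fin.snoc a' v')) = D' v := rfl
    rw [hrfl] at h1' h2'
    omega
  have claimA : ∀ v v', v' ∈ D' v ↔ E v v' := by
    intro v v'
    constructor
    · intro hv' φ hφ
      by_contra hne
      have hex : ∃ φ' : CFormula (n + 1), φ'.qr ≤ k ∧ CSat G γ φ' (Fin.snoc a v) ∧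
          ¬ CSat G' γ' φ' (Fin.snoc a' v') := by
        by_cases hGv : CSat G γ φ (Fin.snoc a v)
        · exact ⟨φ, hφ, hGv, fun h => hne (iff_of_true hGv h)⟩
        · refine ⟨.not φ, hφ, hGv, ?_⟩
          intro h
          exact hne (iff_of_false hGv fun h' => h h')
      obtain ⟨φ', hφ'k, hGv, hG'v'⟩ := hex
      set χ : CFormula (n + 1) := CAnd (θ v) φ' with hχ
      have hχqr : (CFormula.count (p v) χ).qr ≤ k + 1 := by
        simp only [CFormula.qr, hχ, CAnd_qr]
        have := hθqr v
        omega
      have hfil : (univ.filter fun w => CSat G γ χ (Fin.snoc a w)) = CvG v := by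
        ext w
        simp only [hCvG, mem_filter, mem_univ, true_and, hχ, CSat_CAnd]
        constructor
        · exact And.left
        · intro hw
          refine ⟨hw, ?_⟩
          exact ((hθ v w).1 hw _ hφ'k).1 hGv
      have hcountχ : CSat G γ (.count (p v) χ) a := by
        rw [CSat_count, hfil]
      have hcountχ' := (H _ hχqr).1 hcountχ
      rw [CSat_count] at hcountχ'
      have hsub : (univ.filter fun v' => CSat G' γ' χ (Fin.snoc a' v')) ⊆ D' v := by
        intro u' hu'
        simp only [mem_filter, mem_univ, true_and, hχ, CSat_CAnd] at hu'
        exact mem_filter.2 ⟨mem_univ _, hu'.1⟩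
      have heq : (univ.filter fun v' => CSat G' γ' χ (Fin.snoc a' v')) = D' v := by
        apply Finset.eq_of_subset_of_card_le hsub
        rw [hD'card v]
        exact hcountχ'
      rw [← heq] at hv'
      simp only [mem_filter, hχ, CSat_CAnd] at hv'
      exact hG'v' hv'.2.2
    · intro hEvv'
      exact mem_filter.2 ⟨mem_univ _, (hEvv' _ (hθqr v)).1 (hθself v)⟩
  -- assemble hypotheses for the matching lemma
  have h1 : ∀ v w v' w', E v v' → E v w' → E w v' → E w w' := by
    intro v w v' w' h1 h2 h3 φ hφ
    rw [h3 φ hφ, ← h1 φ hφ, h2 φ hφ]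
  have h3 : ∀ v, ∃ v', E v v' := by
    intro v
    have hpos : 0 < p v := by
      rw [hp]
      apply Finset.card_pos.2
      exact ⟨v, mem_filter.2 ⟨mem_univ _, hθself v⟩⟩
    have : (D' v).Nonempty := by
      rw [← Finset.card_pos, hD'card]
      exact hpos
    obtain ⟨v', hv'⟩ := this
    exact ⟨v', (claimA v v').1 hv'⟩
  have h2 : ∀ v v', E v v' →
      (univ.filter fun w' => E v w').card = (univ.filter fun w => E w v').card := by
    intro v v' hEvv'
    have hL : (univ.filter fun w' => E v w') = D' v := by
      ext w'
      simp only [mem_filter, mem_univ, true_and]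
      exact (claimA v w').symm
    have hR : (univ.filter fun w => E w v') = CvG v := by
      ext w
      simp only [hCvG, mem_filter, mem_univ, true_and]
      constructor
      · intro hEwv'
        apply (hθ v w).2
        intro φ hφ
        rw [hEvv' φ hφ, hEwv' φ hφ]
      · intro hw φ hφ
        rw [← (hθ v w).1 hw φ hφ]
        exact hEvv' φ hφ
    rw [hL, hR, hD'card]
  obtain ⟨f, hf⟩ := exists_equiv_of_blocks E hcard h1 h2 h3
  exact ⟨f, fun v => hf v⟩

end Step
section Back
open Finset
open scoped Classical

lemma backward {V V' : Type} [Fintype V] [Fintype V'] {G : SimpleGraph V} {γ : V → ℕ}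
    {G' : SimpleGraph V'} {γ' : V' → ℕ} (hcard : Fintype.card V = Fintype.card V') :
    ∀ (k n : ℕ) (a : Fin n → V) (a' : Fin n → V') (l : List (V × V')),
      (∀ i, (a i, a' i) ∈ l) → (∀ q ∈ l, ∃ i, q = (a i, a' i)) →
      (∀ φ : CFormula n, φ.qr ≤ k → (CSat G γ φ a ↔ CSat G' γ' φ a')) →
      DWin G γ G' γ' k l := by
  intro k
  induction k with
  | zero =>
    intro n a a' l hmem hall H
    show LocalIso G γ G' γ' l
    constructor
    · intro q hq
      obtain ⟨i, rfl⟩ := hall q hq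
      have := H (.col i (γ (a i))) (by simp [CFormula.qr])
      exact (this.1 rfl).symm
    · intro q hq r hr
      obtain ⟨i, rfl⟩ := hall q hq
      obtain ⟨j, rfl⟩ := hall r hr
      exact ⟨H (.eq i j) (by simp [CFormula.qr]), H (.adj i j) (by simp [CFormula.qr])⟩
  | succ k ih =>
    intro n a a' l hmem hall H
    obtain ⟨f, hf⟩ := main_step a a' hcard H
    refine ⟨f, fun v => ?_⟩
    refine ih (n + 1) (Fin.snoc a v) (Fin.snoc a' (f v)) ((v, f v) :: l) ?_ ?_ (hf v)
    · intro i
      refine Fin.lastCases ?_ ?_ i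
      · simp
      · intro j
        simp only [Fin.snoc_castSucc]
        exact List.mem_cons_of_mem _ (hmem j)
    · intro q hq
      rcases List.mem_cons.1 hq with h | h
      · exact ⟨Fin.last n, by simp [h]⟩
      · obtain ⟨i, rfl⟩ := hall q h
        exact ⟨i.castSucc, by simp⟩

end Back
/-- Hella's theorem: Duplicator wins the `k`-round bijective pebble game on `G, G'` iff
`G` and `G'` satisfy the same sentences of counting logic of quantifier rank at most `k`. -/
theorem stmt14 {V V' : Type} [Fintype V] [Fintype V'] (k : ℕ) (hk : 1 ≤ k)
    (G : SimpleGraph V) (γ : V → ℕ) (G' : SimpleGraph V') (γ' : V' → ℕ)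
    (hcard : Fintype.card V = Fintype.card V') :
    DWin G γ G' γ' k [] ↔
      ∀ φ : CFormula 0, φ.qr ≤ k →
        (CSat G γ φ Fin.elim0 ↔ CSat G' γ' φ Fin.elim0) := by
  constructor
  · intro hwin φ hφ
    exact forward φ k [] Fin.elim0 Fin.elim0 hφ (fun i => i.elim0) hwin
  · intro H
    exact backward hcard k 0 Fin.elim0 Fin.elim0 []
      (fun i => i.elim0) (fun q hq => by simp at hq) H
end

section
/- Let G, G' be graphs with |G| = |G'| ≥ 2, v ∈ V(G), v' ∈ V(G') with γ(v) = γ(v'). Then Duplicator has a winning strategy in the k-round bijective pebble game on G, G' from initial position (v, v') if and only if Duplicator has a winning strategy in the k-round bijective pebble game on G∖v and G'∖v', where G∖v denotes G with v deleted and each remaining vertex w recoloured by (γ(w), [vw ∈ E(G)]). -/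
section Aux

variable {V V' C : Type} {G : SimpleGraph V} {γ : V → C} {G' : SimpleGraph V'} {γ' : V' → C}

lemma localIso_congr {l l' : List (V × V')} (h : ∀ p, p ∈ l' → p ∈ l) :
    LocalIso G γ G' γ' l → LocalIso G γ G' γ' l' := by
  rintro ⟨h1, h2⟩
  exact ⟨fun p hp => h1 p (h p hp), fun p hp q hq => h2 p (h p hp) q (h q hq)⟩

lemma dwin_congr {k : ℕ} {l l' : List (V × V')} (h : ∀ p, p ∈ l' → p ∈ l) :
    DWin G γ G' γ' k l → DWin G γ G' γ' k l' := by
  induction k generalizing l l' with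
  | zero => exact localIso_congr h
  | succ k ih =>
    rintro ⟨f, hf⟩
    refine ⟨f, fun w => ih ?_ (hf w)⟩
    intro p hp
    rcases List.mem_cons.1 hp with hp | hp
    · exact hp ▸ List.mem_cons_self
    · exact List.mem_cons_of_mem _ (h p hp)

lemma dwin_tail {k : ℕ} {p : V × V'} {l : List (V × V')} :
    DWin G γ G' γ' k (p :: l) → DWin G γ G' γ' k l :=
  dwin_congr (fun _ hq => List.mem_cons_of_mem _ hq)

lemma dwin_localIso [Nonempty V] {k : ℕ} {l : List (V × V')} :
    DWin G γ G' γ' k l → LocalIso G γ G' γ' l := by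
  induction k generalizing l with
  | zero => exact id
  | succ k ih =>
    rintro ⟨f, hf⟩
    exact localIso_congr (fun _ hq => List.mem_cons_of_mem _ hq)
      (ih (hf (Classical.arbitrary V)))

end Aux

/-- extend a bijection of the complements to a full bijection sending `v ↦ v'`. -/
def extEquiv {V V' : Type} [DecidableEq V] [DecidableEq V'] (v : V) (v' : V')
    (g : {w : V | w ≠ v} ≃ {w' : V' | w' ≠ v'}) : V ≃ V' where
  toFun w := if h : w = v then v' else (g ⟨w, h⟩).1
  invFun w' := if h : w' = v' then v else (g.symm ⟨w', h⟩).1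
  left_inv w := by
    by_cases h : w = v
    · subst h; simp
    · have h2 : ((g ⟨w, h⟩ : _) : V') ≠ v' := (g ⟨w, h⟩).2
      simp only [dif_neg h, dif_neg h2, Subtype.coe_eta, Equiv.symm_apply_apply]
  right_inv w' := by
    by_cases h : w' = v'
    · subst h; simp
    · have h2 : ((g.symm ⟨w', h⟩ : _) : V) ≠ v := (g.symm ⟨w', h⟩).2
      simp only [dif_neg h, dif_neg h2, Subtype.coe_eta, Equiv.apply_symm_apply]

section Key

variable {V V' C : Type} [Fintype V] [Fintype V'] [DecidableEq V] [DecidableEq V']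

lemma key (G : SimpleGraph V) (γ : V → C) (G' : SimpleGraph V') (γ' : V' → C)
    (v : V) (v' : V')
    (hcol : γ v = γ' v') (h2 : 2 ≤ Fintype.card V) (k : ℕ)
    (L : List (↥{w : V | w ≠ v} × ↥{w' : V' | w' ≠ v'})) :
    DWin G γ G' γ' k ((L.map fun p => ((p.1 : V), (p.2 : V'))) ++ [(v, v')]) ↔
      DWin (G.induce {w : V | w ≠ v}) (fun w => (γ w.1, G.Adj v w.1))
        (G'.induce {w : V' | w ≠ v'}) (fun w => (γ' w.1, G'.Adj v' w.1)) k L := by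
  have hne : Nonempty V := Fintype.card_pos_iff.mp (by omega)
  obtain ⟨u0, hu0⟩ := Fintype.exists_ne_of_one_lt_card (by omega) v
  have hneS : Nonempty ↥{w : V | w ≠ v} := ⟨⟨u0, hu0⟩⟩
  induction k generalizing L with
  | zero =>
    constructor
    · rintro ⟨h1, h2'⟩
      have hvv : ((v, v') : V × V') ∈ (L.map fun p => ((p.1 : V), (p.2 : V'))) ++ [(v, v')] := by
        simp
      have hmem : ∀ p ∈ L, ((p.1 : V), (p.2 : V')) ∈
          (L.map fun p => ((p.1 : V), (p.2 : V'))) ++ [(v, v')] := by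
        intro p hp
        exact List.mem_append_left _ (List.mem_map_of_mem hp)
      refine ⟨fun p hp => ?_, fun p hp q hq => ?_⟩
      · have hc := h1 _ (hmem p hp)
        have ha := (h2' _ (hmem p hp) _ hvv).2
        refine Prod.ext hc ?_
        simp only [eq_iff_iff]
        rw [G.adj_comm, G'.adj_comm]
        exact ha
      · have := h2' _ (hmem p hp) _ (hmem q hq)
        refine ⟨?_, this.2⟩
        simp only [Subtype.ext_iff]
        exact this.1
    · rintro ⟨h1, h2'⟩
      have memcase : ∀ p ∈ (L.map fun p => ((p.1 : V), (p.2 : V'))) ++ [(v, v')],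
          (∃ q ∈ L, p = ((q.1 : V), (q.2 : V'))) ∨ p = (v, v') := by
        intro p hp
        rcases List.mem_append.1 hp with hp | hp
        · obtain ⟨q, hq, rfl⟩ := List.mem_map.1 hp
          exact Or.inl ⟨q, hq, rfl⟩
        · exact Or.inr (List.mem_singleton.1 hp)
      refine ⟨fun p hp => ?_, fun p hp q hq => ?_⟩
      · rcases memcase p hp with ⟨q, hq, rfl⟩ | rfl
        · exact congrArg Prod.fst (h1 q hq)
        · exact hcol
      · rcases memcase p hp with ⟨a, ha, rfl⟩ | rfl <;>
          rcases memcase q hq with ⟨b, hb, rfl⟩ | rfl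
        · have := h2' a ha b hb
          refine ⟨?_, this.2⟩
          have h3 := this.1
          rw [Subtype.ext_iff, Subtype.ext_iff] at h3
          exact h3
        · have hadj : G.Adj v (a.1 : V) = G'.Adj v' (a.2 : V') :=
            congrArg Prod.snd (h1 a ha)
          refine ⟨⟨fun h => absurd h a.1.2, fun h => absurd h a.2.2⟩, ?_⟩
          rw [G.adj_comm, G'.adj_comm]
          exact hadj ▸ Iff.rfl
        · have hadj : G.Adj v (b.1 : V) = G'.Adj v' (b.2 : V') :=
            congrArg Prod.snd (h1 b hb)
          refine ⟨⟨fun h => absurd h.symm b.1.2, fun h => absurd h.symm b.2.2⟩, ?_⟩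
          exact hadj ▸ Iff.rfl
        · exact ⟨by simp, by simp⟩
  | succ k ih =>
    constructor
    · rintro ⟨f, hf⟩
      have hfv : f v = v' := by
        have hli := dwin_localIso (hf v)
        have h1 := (hli.2 (v, f v) List.mem_cons_self
          (v, v') (List.mem_cons_of_mem _ (by simp))).1
        exact h1.mp rfl
      have hiff : ∀ w : V, w ∈ {w : V | w ≠ v} ↔ f w ∈ {w' : V' | w' ≠ v'} := by
        intro w
        simp only [Set.mem_setOf_eq, not_iff_not]
        constructor
        · rintro rfl; exact hfv
        · intro h; exact f.injective (h.trans hfv.symm)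
      refine ⟨Equiv.subtypeEquiv f hiff, fun w => ?_⟩
      exact (ih ((w, Equiv.subtypeEquiv f hiff w) :: L)).mp (hf (w : V))
    · rintro ⟨g, hg⟩
      refine ⟨extEquiv v v' g, fun w => ?_⟩
      by_cases h : w = v
      · have hext : extEquiv v v' g w = v' := by simp [extEquiv, h]
        rw [hext, h]
        have hD : DWin (G.induce {w : V | w ≠ v}) (fun w => (γ w.1, G.Adj v w.1))
            (G'.induce {w : V' | w ≠ v'}) (fun w => (γ' w.1, G'.Adj v' w.1)) k L :=
          dwin_tail (hg (Classical.arbitrary _))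
        have := (ih L).mpr hD
        exact dwin_congr (fun p hp => by
          rcases List.mem_cons.1 hp with hp | hp
          · exact hp ▸ List.mem_append_right _ (by simp)
          · exact hp) this
      · have hext : extEquiv v v' g w = (g ⟨w, h⟩ : V') := by simp [extEquiv, h]
        rw [hext]
        exact (ih ((⟨w, h⟩, g ⟨w, h⟩) :: L)).mpr (hg ⟨w, h⟩)
end Key

/-- Lemma (G ≀ v): Duplicator wins the `k`-round bijective pebble game on `G, G'` from
initial position `(v, v')` iff she wins the `k`-round game on the graphs obtained by
deleting `v` resp. `v'` and recolouring each remaining vertex `w` by the pair of its old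
colour and its adjacency to the deleted vertex. -/
theorem stmt15 {V V' C : Type} [Fintype V] [Fintype V'] [DecidableEq V] [DecidableEq V']
    (k : ℕ)
    (G : SimpleGraph V) (γ : V → C) (G' : SimpleGraph V') (γ' : V' → C)
    (hcard : Fintype.card V = Fintype.card V') (h2 : 2 ≤ Fintype.card V)
    (v : V) (v' : V') (hcol : γ v = γ' v') :
    DWin G γ G' γ' k [(v, v')] ↔
      DWin (G.induce {w : V | w ≠ v}) (fun w => (γ w.1, G.Adj v w.1))
        (G'.induce {w : V' | w ≠ v'}) (fun w => (γ' w.1, G'.Adj v' w.1)) k [] := by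
  have := key G γ G' γ' v v' hcol h2 k []
  simpa using this
end
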